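/- For every k ∈ [1,N], the k-th column of the matrix product M_𝐢 · N_𝐢 equals the hook vector r_k. -/
import Mathlib


namespace Stmt7

/-- Row index (1-indexed) of the box labeled `p` in the `t × U` rectangle. -/
def ibox (U p : ℕ) : ℕ := (p - 1) / U + 1

/-- Column index (1-indexed) of the box labeled `p`. -/
def jbox (U p : ℕ) : ℕ := (p - 1) % U + 1

/-- The residue `res(i,j) = t - i + j`. -/
def res (t i j : ℕ) : ℕ := t + j - i

/-- The word `i_p = res(i^p, j^p)`. -/
def iword (t U p : ℕ) : ℕ := res t (ibox U p) (jbox U p)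

/-- `Λ_m = e_1 + ⋯ + e_m` of `ℤ^{n+1}`, with 1-indexed coordinates. -/
def Lam (m : ℕ) : ℕ → ℤ := fun x => if 1 ≤ x ∧ x ≤ m then 1 else 0

/-- The simple reflection `s_r` acting on vectors by exchanging coordinates `r`, `r+1`. -/
def sAct (r : ℕ) (v : ℕ → ℤ) : ℕ → ℤ := fun x =>
  if x = r then v (r + 1) else if x = r + 1 then v r else v x

def applySeq : List ℕ → (ℕ → ℤ) → ℕ → ℤ
  | [], v => v
  | r :: rs, v => sAct r (applySeq rs v)

/-- `s_{i_{p+1}} s_{i_{p+2}} ⋯ s_{i_k} Λ_{i_k}`. -/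
def Nfrak (t U p k : ℕ) : ℕ → ℤ :=
  applySeq ((List.range (k - p)).map fun a => iword t U (p + 1 + a)) (Lam (iword t U k))

/-- The matrix `M_𝐢`. -/
def Ment (t U p q : ℕ) : ℤ :=
  if p ≤ q then Nfrak t U p q (iword t U p) - Nfrak t U p q (iword t U p + 1) else 0

/-- `p⁺ = min {q ∈ (p, N] : i_q = i_p}`, and `N + 1` when no such `q` exists. -/
def pplus (t U Nn p : ℕ) : ℕ :=
  if h : ((Finset.Ioc p Nn).filter fun q => iword t U q = iword t U p).Nonempty then
    ((Finset.Ioc p Nn).filter fun q => iword t U q = iword t U p).min' h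
  else Nn + 1

/-- The matrix `N_𝐢`: `n_{q,k} = 1` if `k = q`, `-1` if `k = q⁺`, and `0` otherwise. -/
def Nent (t U Nn q k : ℕ) : ℤ :=
  if k = q then 1 else if k = pplus t U Nn q then -1 else 0

/-- The hook vector `r_k`: `p`-th entry is `1` iff `i^p ≤ i^k`, `j^p ≤ j^k` and
(`i^p = i^k` or `j^p = j^k`). -/
def rvec (U k p : ℕ) : ℤ :=
  if ibox U p ≤ ibox U k ∧ jbox U p ≤ jbox U k ∧
      (ibox U p = ibox U k ∨ jbox U p = jbox U k) then 1 else 0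

/-! Auxiliary -/

def Sval (t b c d e x : ℕ) : ℤ :=
  if (1 ≤ x ∧ x + d ≤ t) ∨
     (t + 1 ≤ x + b ∧ x + b ≤ t + min c e) ∨
     (t + c + 2 ≤ x + b ∧ x + b ≤ t + e + 1) then 1 else 0

lemma applySeq_cons (r : ℕ) (rs : List ℕ) (v : ℕ → ℤ) :
    applySeq (r :: rs) v = sAct r (applySeq rs v) := rfl

lemma box_mk (U B c : ℕ) (hc1 : 1 ≤ c) (hcU : c ≤ U) :
    ibox U (B * U + c) = B + 1 ∧ jbox U (B * U + c) = c := by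
  obtain ⟨c', rfl⟩ : ∃ c', c = c' + 1 := ⟨c - 1, by omega⟩
  have h1 : B * U + (c' + 1) - 1 = c' + B * U := by
    rw [Nat.add_succ, Nat.succ_sub_one]; ring
  constructor
  · unfold ibox
    rw [h1, Nat.add_mul_div_right _ _ (by omega : 0 < U), Nat.div_eq_of_lt (by omega)]
    omega
  · unfold jbox
    rw [h1, Nat.add_mul_mod_self_right, Nat.mod_eq_of_lt (by omega)]

lemma box_spec (U p : ℕ) (hU : 1 ≤ U) (hp : 1 ≤ p) :
    ∃ B c, p = B * U + c ∧ 1 ≤ c ∧ c ≤ U ∧ ibox U p = B + 1 ∧ jbox U p = c := by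
  refine ⟨(p - 1) / U, (p - 1) % U + 1, ?_, by omega, ?_, rfl, rfl⟩
  · have h := Nat.div_add_mod (p - 1) U
    have h2 : U * ((p - 1) / U) + (p - 1) % U + 1 = p := by
      rw [h]; omega
    conv_lhs => rw [← h2]
    ring
  · have := Nat.mod_lt (p - 1) (show 0 < U by omega); omega

lemma rep_le_iff (U B c D e : ℕ) (hc1 : 1 ≤ c) (hcU : c ≤ U) (he1 : 1 ≤ e) (heU : e ≤ U) :
    B * U + c ≤ D * U + e ↔ (B < D ∨ (B = D ∧ c ≤ e)) := by
  constructor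
  · intro h
    rcases Nat.lt_trichotomy B D with h' | h' | h'
    · exact Or.inl h'
    · subst h'; right; exact ⟨rfl, by linarith⟩
    · exfalso
      have h5 : (D + 1) * U ≤ B * U := Nat.mul_le_mul (by omega) le_rfl
      have h6 : (D + 1) * U = D * U + U := by ring
      linarith
  · rintro (h | ⟨rfl, h⟩)
    · have h5 : (B + 1) * U ≤ D * U := Nat.mul_le_mul (by omega) le_rfl
      have h6 : (B + 1) * U = B * U + U := by ring
      linarith
    · linarith

lemma ibox_le (t U B c q : ℕ) (hU : 1 ≤ U) (hrep : q = B * U + c) (hc1 : 1 ≤ c)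
    (hqN : q ≤ t * U) : B + 1 ≤ t := by
  have h1 : B * U < t * U := by linarith [hrep ▸ hqN]
  have := Nat.lt_of_mul_lt_mul_right h1
  omega

lemma nfrak_succ (t U p q : ℕ) (h : p < q) :
    Nfrak t U p q = sAct (iword t U (p + 1)) (Nfrak t U (p + 1) q) := by
  unfold Nfrak
  have h1 : q - p = (q - (p + 1)) + 1 := by omega
  rw [h1, List.range_succ_eq_map, List.map_cons, applySeq_cons, List.map_map]
  have hl : List.map ((fun a => iword t U (p + 1 + a)) ∘ Nat.succ) (List.range (q - (p + 1)))
      = List.map (fun a => iword t U (p + 1 + 1 + a)) (List.range (q - (p + 1))) := by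
    apply List.map_congr_left
    intro a _
    simp only [Function.comp_apply]
    congr 1
    omega
  rw [hl]

lemma nfrak_closed (t U : ℕ) (hU : 1 ≤ U) :
    ∀ δ p, 1 ≤ p → ibox U (p + δ) ≤ t → ∀ x,
      Nfrak t U p (p + δ) x
        = Sval t (ibox U p) (jbox U p) (ibox U (p + δ)) (jbox U (p + δ)) x := by
  intro δ
  induction δ with
  | zero =>
    intro p hp hd x
    simp only [Nat.add_zero] at *
    have hbase : Nfrak t U p p = Lam (iword t U p) := by
      unfold Nfrak; rw [Nat.sub_self, List.range_zero, List.map_nil]; rfl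
    obtain ⟨B, c, hrep, hc1, hcU, hib, hjb⟩ := box_spec U p hU hp
    have hiw : iword t U p = t + c - (B + 1) := by
      unfold iword res; rw [hib, hjb]
    rw [hbase, hiw, hib, hjb]
    rw [hib] at hd
    unfold Lam Sval
    split_ifs <;> omega
  | succ δ ih =>
    intro p hp hd x
    rw [show p + (δ + 1) = p + 1 + δ from by omega] at *
    have hrec := nfrak_succ t U p (p + 1 + δ) (by omega)
    obtain ⟨B, c, hrep, hc1, hcU, hib, hjb⟩ := box_spec U p hU hp
    obtain ⟨B', c', hrep', hc1', hcU', hib', hjb'⟩ := box_spec U (p + 1) hU (by omega)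
    obtain ⟨D, e, hrepq, he1, heU, hibq, hjbq⟩ := box_spec U (p + 1 + δ) hU (by omega)
    have hDt : D + 1 ≤ t := by rw [hibq] at hd; exact hd
    -- next box relation
    have hnext : (c < U ∧ B' = B ∧ c' = c + 1) ∨ (c = U ∧ B' = B + 1 ∧ c' = 1) := by
      rcases Nat.lt_or_ge c U with hcs | hcs
      · left
        have heq : B * U + (c + 1) = B' * U + c' := by
          rw [← hrep', hrep]; ring
        have h1 := (rep_le_iff U B (c + 1) B' c' (by omega) (by omega) hc1' hcU').mp (le_of_eq heq)
        have h2 := (rep_le_iff U B' c' B (c + 1) hc1' hcU' (by omega) (by omega)).mp (le_of_eq heq.symm)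
        refine ⟨hcs, ?_, ?_⟩ <;> omega
      · right
        have hcU2 : c = U := by omega
        have heq : (B + 1) * U + 1 = B' * U + c' := by
          rw [← hrep']; rw [hrep, hcU2]; ring
        have h1 := (rep_le_iff U (B + 1) 1 B' c' (by omega) (by omega) hc1' hcU').mp (le_of_eq heq)
        have h2 := (rep_le_iff U B' c' (B + 1) 1 hc1' hcU' (by omega) (by omega)).mp (le_of_eq heq.symm)
        refine ⟨hcU2, ?_, ?_⟩ <;> omega
    have hlex : B' < D ∨ (B' = D ∧ c' ≤ e) := by
      apply (rep_le_iff U B' c' D e hc1' hcU' he1 heU).mp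
      rw [← hrep', ← hrepq]; omega
    have hv : ∀ y, Nfrak t U (p + 1) (p + 1 + δ) y = Sval t (B' + 1) c' (D + 1) e y := by
      intro y
      rw [ih (p + 1) (by omega) (by rw [hibq]; exact hDt) y, hib', hjb', hibq, hjbq]
    have hiw : iword t U (p + 1) = t + c' - (B' + 1) := by
      unfold iword res; rw [hib', hjb']
    rw [hrec]
    simp only [sAct, hv, hiw, hib, hjb, hibq, hjbq]
    clear hrec hv hrep hrep' hrepq hiw hib hjb hib' hjb' hibq hjbq hd ih
    unfold Sval
    split_ifs <;> omega

lemma ment_eq (t U p q : ℕ) (hU : 1 ≤ U) (hp : 1 ≤ p) (hq1 : 1 ≤ q)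
    (hqN : q ≤ t * U) :
    Ment t U p q = if ibox U p ≤ ibox U q ∧ jbox U p ≤ jbox U q then 1 else 0 := by
  obtain ⟨B, c, hrep, hc1, hcU, hib, hjb⟩ := box_spec U p hU hp
  obtain ⟨D, e, hrepq, he1, heU, hibq, hjbq⟩ := box_spec U q hU hq1
  have hDt : D + 1 ≤ t := ibox_le t U D e q hU hrepq he1 hqN
  by_cases hle : p ≤ q
  · have hlex : B < D ∨ (B = D ∧ c ≤ e) := by
      apply (rep_le_iff U B c D e hc1 hcU he1 heU).mp
      rw [← hrep, ← hrepq]; exact hle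
    obtain ⟨δ, rfl⟩ : ∃ δ, q = p + δ := ⟨q - p, by omega⟩
    have hcl := nfrak_closed t U hU δ p hp (by rw [hibq]; exact hDt)
    have hiw : iword t U p = t + c - (B + 1) := by
      unfold iword res; rw [hib, hjb]
    unfold Ment
    rw [if_pos hle, hcl, hcl, hiw, hib, hjb, hibq, hjbq]
    clear hcl hrep hrepq hiw hib hjb hibq hjbq hle
    unfold Sval
    split_ifs <;> omega
  · have hnlex : ¬ (B < D ∨ (B = D ∧ c ≤ e)) := by
      rw [← rep_le_iff U B c D e hc1 hcU he1 heU, ← hrep, ← hrepq]; omega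
    unfold Ment
    rw [if_neg hle, hib, hjb, hibq, hjbq, if_neg (by omega)]

lemma key_y (t U q y : ℕ) (hU : 1 ≤ U) (hq1 : 1 ≤ q) (hy1 : q < y) (hy2 : y ≤ t * U)
    (hiw : iword t U y = iword t U q) :
    ibox U q + 1 ≤ t ∧ jbox U q + 1 ≤ U ∧ q + U + 1 ≤ y := by
  obtain ⟨B, c, hrep, hc1, hcU, hib, hjb⟩ := box_spec U q hU hq1
  obtain ⟨B₂, c₂, hrep₂, hc1₂, hcU₂, hib₂, hjb₂⟩ := box_spec U y hU (by omega)
  have hB₂t : B₂ + 1 ≤ t := ibox_le t U B₂ c₂ y hU hrep₂ hc1₂ hy2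
  have hres : c₂ + (B + 1) = c + (B₂ + 1) := by
    unfold iword res at hiw
    rw [hib, hjb, hib₂, hjb₂] at hiw
    omega
  have hlex : B < B₂ ∨ (B = B₂ ∧ c ≤ c₂) := by
    apply (rep_le_iff U B c B₂ c₂ hc1 hcU hc1₂ hcU₂).mp
    rw [← hrep, ← hrep₂]; omega
  have hBB : B + 1 ≤ B₂ := by
    rcases hlex with h | ⟨hBe, _⟩
    · omega
    · exfalso
      have hce : c₂ = c := by omega
      rw [hrep, hrep₂, hBe, hce] at hy1
      exact lt_irrefl _ hy1
  have hcc : c + 1 ≤ c₂ := by omega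
  have hmul : (B + 1) * U ≤ B₂ * U := Nat.mul_le_mul hBB le_rfl
  have hmul2 : (B + 1) * U = B * U + U := by ring
  refine ⟨by omega, by omega, by rw [hrep, hrep₂]; linarith⟩

lemma pplus_cases (t U q : ℕ) (hU : 1 ≤ U) (hq1 : 1 ≤ q) (hqN : q ≤ t * U) :
    (ibox U q + 1 ≤ t ∧ jbox U q + 1 ≤ U ∧ pplus t U (t * U) q = q + U + 1 ∧
      q + U + 1 ≤ t * U ∧ ibox U (q + U + 1) = ibox U q + 1 ∧
      jbox U (q + U + 1) = jbox U q + 1)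
    ∨ ((ibox U q = t ∨ jbox U q = U) ∧ pplus t U (t * U) q = t * U + 1) := by
  obtain ⟨B, c, hrep, hc1, hcU, hib, hjb⟩ := box_spec U q hU hq1
  have hBt : B + 1 ≤ t := ibox_le t U B c q hU hrep hc1 hqN
  by_cases hsmall : B + 2 ≤ t ∧ c + 1 ≤ U
  · left
    obtain ⟨hBt2, hcU2⟩ := hsmall
    have hrep' : q + U + 1 = (B + 1) * U + (c + 1) := by rw [hrep]; ring
    have hbox' := box_mk U (B + 1) (c + 1) (by omega) hcU2
    have hle : q + U + 1 ≤ t * U := by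
      have h5 : (B + 2) * U ≤ t * U := Nat.mul_le_mul hBt2 le_rfl
      have h6 : (B + 2) * U = (B + 1) * U + U := by ring
      rw [hrep']; linarith
    have hiw : iword t U (q + U + 1) = iword t U q := by
      unfold iword res
      rw [hib, hjb, hrep', hbox'.1, hbox'.2]
      omega
    have hmem : q + U + 1 ∈ (Finset.Ioc q (t * U)).filter fun y => iword t U y = iword t U q :=
      Finset.mem_filter.mpr ⟨Finset.mem_Ioc.mpr ⟨by omega, hle⟩, hiw⟩
    have hpp : pplus t U (t * U) q = q + U + 1 := by
      unfold pplus
      rw [dif_pos ⟨_, hmem⟩]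
      apply le_antisymm (Finset.min'_le _ _ hmem)
      apply Finset.le_min'
      intro y hy
      obtain ⟨hy0, hyiw⟩ := Finset.mem_filter.mp hy
      obtain ⟨hy1, hy2⟩ := Finset.mem_Ioc.mp hy0
      exact (key_y t U q y hU hq1 hy1 hy2 hyiw).2.2
    refine ⟨by omega, by omega, hpp, hle, ?_, ?_⟩
    · rw [hrep', hbox'.1, hib]
    · rw [hrep', hbox'.2, hjb]
  · right
    constructor
    · rw [hib, hjb]; omega
    · unfold pplus
      rw [dif_neg]
      rintro ⟨y, hy⟩
      obtain ⟨hy0, hyiw⟩ := Finset.mem_filter.mp hy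
      obtain ⟨hy1, hy2⟩ := Finset.mem_Ioc.mp hy0
      have hk := key_y t U q y hU hq1 hy1 hy2 hyiw
      rw [hib, hjb] at hk
      omega

lemma pplus_gt (t U q : ℕ) (hqN : q ≤ t * U) : q < pplus t U (t * U) q := by
  unfold pplus
  split
  · next h =>
    have hm := Finset.min'_mem _ h
    exact (Finset.mem_Ioc.mp (Finset.mem_filter.mp hm).1).1
  · omega

theorem master (t U : ℕ) (ht : 1 ≤ t) (hU : 1 ≤ U) :
    ∀ k p, 1 ≤ k → k ≤ t * U → 1 ≤ p → p ≤ t * U →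
      (∑ q ∈ Finset.Icc 1 (t * U), Ment t U p q * Nent t U (t * U) q k)
        = rvec U k p := by
  intro k p hk1 hkN hp1 hpN
  have hsummand : ∀ q ∈ Finset.Icc 1 (t * U), Ment t U p q * Nent t U (t * U) q k
      = (if q = k then Ment t U p q else 0)
        + (if pplus t U (t * U) q = k then -(Ment t U p q) else 0) := by
    intro q hq
    simp only [Finset.mem_Icc] at hq
    have hgt : q < pplus t U (t * U) q := pplus_gt t U q hq.2
    unfold Nent
    by_cases h1 : k = q
    · subst h1
      rw [if_pos rfl, if_pos rfl, if_neg (by omega)]; ring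
    · rw [if_neg h1, if_neg (Ne.symm h1)]
      by_cases h2 : k = pplus t U (t * U) q
      · rw [if_pos h2, if_pos h2.symm]; ring
      · rw [if_neg h2, if_neg (fun hh => h2 hh.symm)]; ring
  rw [Finset.sum_congr rfl hsummand, Finset.sum_add_distrib]
  have hs1 : (∑ q ∈ Finset.Icc 1 (t * U), if q = k then Ment t U p q else 0)
      = Ment t U p k := by
    rw [Finset.sum_ite_eq' (Finset.Icc 1 (t * U)) k (fun q => Ment t U p q),
      if_pos (Finset.mem_Icc.mpr ⟨hk1, hkN⟩)]
  rw [hs1]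
  obtain ⟨B, c, hrep, hc1, hcU, hib, hjb⟩ := box_spec U p hU hp1
  obtain ⟨D, e, hrepk, he1, heU, hibk, hjbk⟩ := box_spec U k hU hk1
  have hDt : D + 1 ≤ t := ibox_le t U D e k hU hrepk he1 hkN
  by_cases hcase : 1 ≤ D ∧ 2 ≤ e
  · obtain ⟨D', rfl⟩ : ∃ D', D = D' + 1 := ⟨D - 1, by omega⟩
    obtain ⟨e', rfl⟩ : ∃ e', e = e' + 1 := ⟨e - 1, by omega⟩
    have hkbig : U + 2 ≤ k := by
      have h5 : U ≤ (D' + 1) * U := Nat.le_mul_of_pos_left U (by omega)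
      rw [hrepk]; omega
    set q₀ := k - (U + 1) with hq₀
    have hq₀k : q₀ + (U + 1) = k := Nat.sub_add_cancel (by omega)
    have hq₀rep : q₀ = D' * U + e' := by
      have h8 : q₀ + (U + 1) = D' * U + e' + (U + 1) := by
        rw [hq₀k, hrepk]; ring
      omega
    have he'1 : 1 ≤ e' := by omega
    have hbox₀ := box_mk U D' e' he'1 (by omega)
    rw [← hq₀rep] at hbox₀
    have hq₀1 : 1 ≤ q₀ := by omega
    have hq₀N : q₀ ≤ t * U := by omega
    have hpc := pplus_cases t U q₀ hU hq₀1 hq₀N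
    have hpp₀ : pplus t U (t * U) q₀ = k := by
      rcases hpc with ⟨_, _, hpp, _, _, _⟩ | ⟨hbad, _⟩
      · rw [hpp]; omega
      · rw [hbox₀.1, hbox₀.2] at hbad; omega
    have hs2 : (∑ q ∈ Finset.Icc 1 (t * U),
        if pplus t U (t * U) q = k then -(Ment t U p q) else 0) = -(Ment t U p q₀) := by
      rw [Finset.sum_eq_single q₀]
      · rw [if_pos hpp₀]
      · intro b hb hne
        simp only [Finset.mem_Icc] at hb
        rw [if_neg]
        intro hpp
        rcases pplus_cases t U b hU hb.1 hb.2 with ⟨_, _, hppb, _, _, _⟩ | ⟨_, hppb⟩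
        · rw [hppb] at hpp; omega
        · rw [hppb] at hpp; omega
      · intro h
        exact absurd (Finset.mem_Icc.mpr ⟨hq₀1, hq₀N⟩) h
    rw [hs2, ment_eq t U p k hU hp1 hk1 hkN, ment_eq t U p q₀ hU hp1 hq₀1 hq₀N]
    unfold rvec
    rw [hib, hjb, hibk, hjbk, hbox₀.1, hbox₀.2]
    split_ifs <;> omega
  · have hs2 : (∑ q ∈ Finset.Icc 1 (t * U),
        if pplus t U (t * U) q = k then -(Ment t U p q) else 0) = 0 := by
      apply Finset.sum_eq_zero
      intro q hq
      simp only [Finset.mem_Icc] at hq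
      rw [if_neg]
      intro hpp
      rcases pplus_cases t U q hU hq.1 hq.2 with ⟨_, _, hppb, _, hibq, hjbq⟩ | ⟨_, hppb⟩
      · rw [hppb] at hpp
        rw [hpp] at hibq hjbq
        rw [hibk] at hibq
        rw [hjbk] at hjbq
        obtain ⟨Bq, cq, hrepq, hcq1, hcqU, hibq', hjbq'⟩ := box_spec U q hU hq.1
        rw [hibq'] at hibq
        rw [hjbq'] at hjbq
        omega
      · rw [hppb] at hpp; omega
    rw [hs2, ment_eq t U p k hU hp1 hk1 hkN]
    unfold rvec
    rw [hib, hjb, hibk, hjbk]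
    split_ifs <;> omega

theorem stmt7 (n t : ℕ) (hn : 1 ≤ n) (ht1 : 1 ≤ t) (htn : t ≤ n) :
    ∀ k p, 1 ≤ k → k ≤ t * (n - t + 1) → 1 ≤ p → p ≤ t * (n - t + 1) →
      (∑ q ∈ Finset.Icc 1 (t * (n - t + 1)),
          Ment t (n - t + 1) p q * Nent t (n - t + 1) (t * (n - t + 1)) q k)
        = rvec (n - t + 1) k p := by
  intro k p hk1 hkN hp1 hpN
  exact master t (n - t + 1) ht1 (by omega) k p hk1 hkN hp1 hpN

end Stmt7
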